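/- Let a, d, s, l be positive integers and let G be a graph. Suppose there is a d-meager (a^{l-1}(s + d(l-1)), 1)-constellation (S₀, L₀) in G. Then either (a) there exists an a-alignment (S, L, π) in G with S ⊆ S₀ and L a subpath of L₀, or (b) there exists a plain (s, l)-constellation (S, 𝓛) in G with S ⊆ S₀ and every path in 𝓛 a subpath of L₀. -/

import Mathlib

open SimpleGraph

universe u

variable {V : Type u}

structure IndPath (G : SimpleGraph V) where
  n : ℕ
  npos : 0 < n
  f : Fin n → V
  inj : Function.Injective f
  adj : ∀ i j : Fin n, G.Adj (f i) (f j) ↔ ((i : ℕ) + 1 = j ∨ (j : ℕ) + 1 = i)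

def IndPath.verts {G : SimpleGraph V} (L : IndPath G) : Set V := Set.range L.f

def IndPath.length {G : SimpleGraph V} (L : IndPath G) : ℕ := L.n - 1

structure IndCycle (G : SimpleGraph V) where
  n : ℕ
  hn : 3 ≤ n
  f : ZMod n → V
  inj : Function.Injective f
  adj : ∀ i j : ZMod n, G.Adj (f i) (f j) ↔ (i = j + 1 ∨ j = i + 1)

def Pinched (c h : ℕ) (G : SimpleGraph V) : Prop :=
  ¬ ∃ (x : V) (C : Fin c → IndCycle G),
      (∀ i, h + 2 ≤ (C i).n) ∧
      (∀ i, (C i).f 0 = x) ∧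
      (∀ i j : Fin c, i ≠ j →
        (Set.range (C i).f ∩ Set.range (C j).f = {x}) ∧
        (∀ u ∈ Set.range (C i).f, ∀ v ∈ Set.range (C j).f,
          u ≠ x → v ≠ x → ¬ G.Adj u v))

structure Constellation (G : SimpleGraph V) (s l : ℕ) where
  S : Finset V
  card_S : S.card = s
  stable : ∀ x ∈ S, ∀ y ∈ S, ¬ G.Adj x y
  P : Fin l → IndPath G
  disj : ∀ i j : Fin l, i ≠ j → Disjoint (P i).verts (P j).verts
  sep : ∀ x ∈ S, ∀ i : Fin l, x ∉ (P i).verts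
  nbr : ∀ x ∈ S, ∀ i : Fin l, ∃ v ∈ (P i).verts, G.Adj x v

def Constellation.Plain {G : SimpleGraph V} {s l : ℕ} (c : Constellation G s l) : Prop :=
  ∀ i j : Fin l, i ≠ j → ∀ u ∈ (c.P i).verts, ∀ v ∈ (c.P j).verts, ¬ G.Adj u v

def Constellation.Meager {G : SimpleGraph V} {s l : ℕ} (c : Constellation G s l) (d : ℕ) : Prop :=
  ∀ i : Fin l, ∀ p : Fin (c.P i).n, ((↑c.S : Set V) ∩ {x | G.Adj x ((c.P i).f p)}).ncard ≤ d

def Constellation.Hollow {G : SimpleGraph V} {s l : ℕ} (c : Constellation G s l) (h : ℕ) : Prop :=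
  ∀ x ∈ c.S, ∀ i : Fin l, ∀ p q : Fin (c.P i).n, (p : ℕ) < q →
    G.Adj x ((c.P i).f p) → G.Adj x ((c.P i).f q) →
    (∀ r : Fin (c.P i).n, (p : ℕ) < r → (r : ℕ) < q → ¬ G.Adj x ((c.P i).f r)) →
    (q : ℕ) - p < h

structure PathAlignment (G : SimpleGraph V) (s : ℕ) extends Constellation G s 1 where
  π : Fin s → V
  π_inj : Function.Injective π
  π_mem : ∀ i, π i ∈ S
  order : ∃ rev : Bool, ∀ i j : Fin s, i < j →
    ∀ p q : Fin (P 0).n, G.Adj (π i) ((P 0).f p) → G.Adj (π j) ((P 0).f q) →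
      (if rev then (q : ℕ) < p else (p : ℕ) < q)

structure PDArray (G : SimpleGraph V) (s h : ℕ) extends Constellation G s s where
  plain : toConstellation.Plain
  hollow : toConstellation.Hollow h
  π : Fin s → V
  π_inj : Function.Injective π
  π_mem : ∀ i, π i ∈ S
  aligned : ∀ k : Fin s, ∃ rev : Bool, ∀ i j : Fin s, i < j →
    ∀ p q : Fin (P k).n, G.Adj (π i) ((P k).f p) → G.Adj (π j) ((P k).f q) →
      (if rev then (q : ℕ) < p else (p : ℕ) < q)

def PDArray.verts {G : SimpleGraph V} {s h : ℕ} (A : PDArray G s h) : Set V :=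
  (↑A.S : Set V) ∪ ⋃ i : Fin s, (A.P i).verts

def IsMinor {W : Type*} (H : SimpleGraph W) (G : SimpleGraph V) : Prop :=
  ∃ B : W → Set V,
    (∀ w, (B w).Nonempty) ∧
    (∀ w, (G.induce (B w)).Connected) ∧
    (∀ w w' : W, w ≠ w' → Disjoint (B w) (B w')) ∧
    (∀ w w' : W, H.Adj w w' → ∃ u ∈ B w, ∃ v ∈ B w', G.Adj u v)

def TreewidthLe (G : SimpleGraph V) (w : ℕ) : Prop :=
  ∃ (ι : Type u) (T : SimpleGraph ι), T.IsAcyclic ∧ T.Connected ∧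
    ∃ t : V → Set ι,
      (∀ v, (t v).Nonempty) ∧
      (∀ v, (T.induce (t v)).Connected) ∧
      (∀ u v : V, G.Adj u v → (t u ∩ t v).Nonempty) ∧
      (∀ x : ι, {v : V | x ∈ t v}.ncard ≤ w + 1)

def PD (s : ℕ) : SimpleGraph (Fin s ⊕ Fin s × Fin s) :=
  SimpleGraph.fromRel (fun a b =>
    match a, b with
    | Sum.inr (i, k), Sum.inr (i', k') => i = i' ∧ (k : ℕ) + 1 = (k' : ℕ)
    | Sum.inl j, Sum.inr (_, k) => k = j
    | _, _ => False)
def psub {G : SimpleGraph V} (L : IndPath G) (lo hi : ℕ) (h1 : lo ≤ hi) (h2 : hi < L.n) :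
    IndPath G where
  n := hi + 1 - lo
  npos := by omega
  f i := L.f ⟨lo + (i : ℕ), by have := i.2; omega⟩
  inj := by
    intro i j hij
    have h := L.inj hij
    have h3 : lo + (i : ℕ) = lo + (j : ℕ) := congrArg Fin.val h
    exact Fin.ext (by omega)
  adj := by
    intro i j
    rw [L.adj]
    have hi2 : (i : ℕ) < hi + 1 - lo := i.2
    have hj2 : (j : ℕ) < hi + 1 - lo := j.2
    show (lo + (i : ℕ) + 1 = lo + (j : ℕ) ∨ lo + (j : ℕ) + 1 = lo + (i : ℕ)) ↔ _
    constructor <;> intro h <;> omega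

lemma psub_verts {G : SimpleGraph V} (L : IndPath G) (lo hi : ℕ) (h1 : lo ≤ hi) (h2 : hi < L.n) :
    (psub L lo hi h1 h2).verts = {v | ∃ p : Fin L.n, lo ≤ (p : ℕ) ∧ (p : ℕ) ≤ hi ∧ v = L.f p} := by
  ext v
  constructor
  · rintro ⟨i, rfl⟩
    have hi2 : (i : ℕ) < hi + 1 - lo := i.2
    exact ⟨⟨lo + (i : ℕ), by omega⟩, Nat.le_add_right _ _,
      show lo + (i : ℕ) ≤ hi by omega, rfl⟩
  · rintro ⟨p, hp1, hp2, rfl⟩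
    refine ⟨⟨(p : ℕ) - lo, show (p : ℕ) - lo < hi + 1 - lo by omega⟩, ?_⟩
    have h : (⟨lo + ((p : ℕ) - lo), by have := p.2; omega⟩ : Fin L.n) = p :=
      Fin.ext (show lo + ((p : ℕ) - lo) = (p : ℕ) by omega)
    exact congrArg L.f h

lemma psub_verts_subset {G : SimpleGraph V} (L : IndPath G) (lo hi : ℕ) (h1 : lo ≤ hi)
    (h1' : hi < L.n) : (psub L lo hi h1 h1').verts ⊆ L.verts := by
  rw [psub_verts]
  rintro v ⟨p, _, _, rfl⟩
  exact ⟨p, rfl⟩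

lemma mem_psub_verts {G : SimpleGraph V} (L : IndPath G) (lo hi : ℕ) (h1 : lo ≤ hi)
    (h2 : hi < L.n) (p : Fin L.n) (hp1 : lo ≤ (p : ℕ)) (hp2 : (p : ℕ) ≤ hi) :
    L.f p ∈ (psub L lo hi h1 h2).verts := by
  rw [psub_verts]
  exact ⟨p, hp1, hp2, rfl⟩

private lemma arith (a A m0 d c : ℕ) (ha : 0 < a) (hA : 0 < A) (hd : 0 < d)
    (h1 : A * a * (m0 + d) ≤ c) : a * (A * m0 + d - 1) < c + (A * m0 + d - 1) := by
  obtain ⟨e, rfl⟩ : ∃ e, d = e + 1 := ⟨d - 1, by omega⟩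
  have h2 : A * m0 + (e + 1) - 1 = A * m0 + e := by omega
  rw [h2]
  have hae : a * e ≤ A * (a * e) := Nat.le_mul_of_pos_left _ hA
  have h3 : a * (A * m0 + e) < A * a * (m0 + (e + 1)) := by
    nlinarith [hae, Nat.mul_pos hA ha]
  exact lt_of_lt_of_le h3 (le_trans h1 (Nat.le_add_right _ _))
lemma inner_lemma {G : SimpleGraph V} (L : IndPath G) (k lo hi : ℕ) :
    ∀ m : ℕ, ∀ S'' : Finset V,
      (∀ x ∈ S'', ∃ p : Fin L.n, lo ≤ (p : ℕ) ∧ (p : ℕ) ≤ hi ∧ G.Adj x (L.f p)) →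
      m * (k - 1) < S''.card + (k - 1) →
      (∃ x : Fin m → V, (∀ i, x i ∈ S'') ∧
        (∀ i, ∃ p : Fin L.n, lo ≤ (p : ℕ) ∧ (p : ℕ) ≤ hi ∧ G.Adj (x i) (L.f p)) ∧
        (∀ i j : Fin m, i < j → ∀ p q : Fin L.n,
          lo ≤ (p : ℕ) → (p : ℕ) ≤ hi → lo ≤ (q : ℕ) → (q : ℕ) ≤ hi →
          G.Adj (x i) (L.f p) → G.Adj (x j) (L.f q) → (p : ℕ) < (q : ℕ))) ∨
      (∃ (pp : Fin L.n) (C : Finset V), lo ≤ (pp : ℕ) ∧ (pp : ℕ) ≤ hi ∧ C ⊆ S'' ∧ k ≤ C.card ∧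
        ∀ x ∈ C, (∃ q : Fin L.n, lo ≤ (q : ℕ) ∧ (q : ℕ) ≤ (pp : ℕ) ∧ G.Adj x (L.f q)) ∧
                 (∃ q : Fin L.n, (pp : ℕ) ≤ (q : ℕ) ∧ (q : ℕ) ≤ hi ∧ G.Adj x (L.f q))) := by
  intro m
  induction m with
  | zero =>
    intro S'' _ _
    exact Or.inl ⟨Fin.elim0, fun i => i.elim0, fun i => i.elim0, fun i => i.elim0⟩
  | succ m ih =>
    intro S'' hnbr hcard
    classical
    have hexp : (m + 1) * (k - 1) = m * (k - 1) + (k - 1) := by ring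
    have hm : m * (k - 1) < S''.card := by linarith [hcard, hexp.symm.le, hexp.le]
    have hne : S''.Nonempty := Finset.card_pos.mp (Nat.lt_of_le_of_lt (Nat.zero_le _) hm)
    set Nset : V → Finset (Fin L.n) :=
      fun x => Finset.univ.filter (fun p : Fin L.n => lo ≤ (p : ℕ) ∧ (p : ℕ) ≤ hi ∧ G.Adj x (L.f p))
      with hNset
    have hNne : ∀ x ∈ S'', (Nset x).Nonempty := by
      intro x hx
      obtain ⟨p, h1, h2, h3⟩ := hnbr x hx
      exact ⟨p, by simp [hNset, h1, h2, h3]⟩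
    obtain ⟨x₀, hx₀, hmin⟩ := S''.exists_min_image
      (fun x => (Nset x).sup (fun p => (p : ℕ))) hne
    have hminS : ∀ y ∈ S'', (Nset x₀).sup (fun p => (p : ℕ)) ≤ (Nset y).sup (fun p => (p : ℕ)) :=
      fun y hy => hmin y hy
    obtain ⟨p₀, hp₀mem, hp₀eq⟩ := Finset.exists_mem_eq_sup (Nset x₀) (hNne x₀ hx₀)
      (fun p : Fin L.n => (p : ℕ))
    have hp₀ : lo ≤ (p₀ : ℕ) ∧ (p₀ : ℕ) ≤ hi ∧ G.Adj x₀ (L.f p₀) := by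
      simpa [hNset] using hp₀mem
    have hub : ∀ x ∈ S'', ∀ q : Fin L.n, lo ≤ (q : ℕ) → (q : ℕ) ≤ hi → G.Adj x (L.f q) →
        (q : ℕ) ≤ (Nset x).sup (fun p => (p : ℕ)) := by
      intro x _ q h1 h2 h3
      exact Finset.le_sup (by simp [hNset, h1, h2, h3])
    set C : Finset V := S''.filter
      (fun x => ∃ q : Fin L.n, lo ≤ (q : ℕ) ∧ (q : ℕ) ≤ (p₀ : ℕ) ∧ G.Adj x (L.f q)) with hC
    by_cases hCk : k ≤ C.card
    · refine Or.inr ⟨p₀, C, hp₀.1, hp₀.2.1, Finset.filter_subset _ _, hCk, ?_⟩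
      intro x hx
      have hxS : x ∈ S'' := Finset.filter_subset _ _ hx
      refine ⟨(Finset.mem_filter.mp hx).2, ?_⟩
      obtain ⟨q, hqmem, hqeq⟩ := Finset.exists_mem_eq_sup (Nset x) (hNne x hxS)
        (fun p : Fin L.n => (p : ℕ))
      have hq : lo ≤ (q : ℕ) ∧ (q : ℕ) ≤ hi ∧ G.Adj x (L.f q) := by simpa [hNset] using hqmem
      have hle : (p₀ : ℕ) ≤ (q : ℕ) := by
        have h := hminS x hxS
        omega
      exact ⟨q, hle, hq.2.1, hq.2.2⟩
    · have hCsub : C ⊆ S'' := Finset.filter_subset _ _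
      have hRcard : S''.card ≤ (S'' \ C).card + (k - 1) := by
        have h1 := Finset.card_sdiff_add_card_eq_card hCsub
        omega
      have hRnbr : ∀ x ∈ S'' \ C, ∃ p : Fin L.n, lo ≤ (p : ℕ) ∧ (p : ℕ) ≤ hi ∧ G.Adj x (L.f p) :=
        fun x hx => hnbr x (Finset.sdiff_subset hx)
      have hRcard2 : m * (k - 1) < (S'' \ C).card + (k - 1) := by omega
      rcases ih (S'' \ C) hRnbr hRcard2 with ⟨x', hmem', hnbr', hord'⟩ | ⟨pp, C', h1, h2, h3, h4, h5⟩
      · refine Or.inl ⟨Fin.cases x₀ x', ?_, ?_, ?_⟩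
        · intro i
          rcases Fin.eq_zero_or_eq_succ i with rfl | ⟨i', rfl⟩
          · simpa using hx₀
          · simpa using Finset.sdiff_subset (hmem' i')
        · intro i
          rcases Fin.eq_zero_or_eq_succ i with rfl | ⟨i', rfl⟩
          · simpa using ⟨p₀, hp₀⟩
          · simpa using hnbr' i'
        · intro i j hij p q hp1 hp2 hq1 hq2 hadjp hadjq
          rcases Fin.eq_zero_or_eq_succ j with rfl | ⟨j', rfl⟩
          · exact absurd hij (by simp [Fin.lt_def])
          rcases Fin.eq_zero_or_eq_succ i with rfl | ⟨i', rfl⟩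
          · simp only [Fin.cases_zero, Fin.cases_succ] at hadjp hadjq
            have hple : (p : ℕ) ≤ (p₀ : ℕ) := by
              have h := hub x₀ hx₀ p hp1 hp2 hadjp
              omega
            have hqgt : (p₀ : ℕ) < (q : ℕ) := by
              have hmemR := Finset.mem_sdiff.mp (hmem' j')
              by_contra hcon
              exact hmemR.2 (Finset.mem_filter.mpr ⟨hmemR.1, q, hq1, by omega, hadjq⟩)
            omega
          · simp only [Fin.cases_succ] at hadjp hadjq
            exact hord' i' j' (by
              rw [Fin.lt_def] at hij ⊢
              simpa using hij) p q hp1 hp2 hq1 hq2 hadjp hadjq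
      · exact Or.inr ⟨pp, C', h1, h2, h3.trans Finset.sdiff_subset, h4, h5⟩
lemma key_lemma (a d s : ℕ) (ha : 0 < a) (hd : 0 < d) (hs : 0 < s)
    {G : SimpleGraph V} (S₀ : Finset V) (L : IndPath G)
    (hmeag : ∀ p : Fin L.n, ((↑S₀ : Set V) ∩ {x | G.Adj x (L.f p)}).ncard ≤ d) :
    ∀ l : ℕ, 0 < l → ∀ S' : Finset V, S' ⊆ S₀ → ∀ lo hi : ℕ, lo ≤ hi → hi < L.n →
      (∀ x ∈ S', ∃ p : Fin L.n, lo ≤ (p : ℕ) ∧ (p : ℕ) ≤ hi ∧ G.Adj x (L.f p)) →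
      a ^ (l - 1) * (s + d * (l - 1)) ≤ S'.card →
      (∃ lo' hi' : ℕ, ∃ x : Fin a → V, lo ≤ lo' ∧ lo' ≤ hi' ∧ hi' ≤ hi ∧
        (∀ i, x i ∈ S') ∧
        (∀ i, ∃ p : Fin L.n, lo' ≤ (p : ℕ) ∧ (p : ℕ) ≤ hi' ∧ G.Adj (x i) (L.f p)) ∧
        (∀ i j : Fin a, i < j → ∀ p q : Fin L.n,
          lo' ≤ (p : ℕ) → (p : ℕ) ≤ hi' → lo' ≤ (q : ℕ) → (q : ℕ) ≤ hi' →
          G.Adj (x i) (L.f p) → G.Adj (x j) (L.f q) → (p : ℕ) < (q : ℕ))) ∨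
      (∃ (T : Finset V) (w : Fin l → ℕ × ℕ), T ⊆ S' ∧ T.card = s ∧
        (∀ i, lo ≤ (w i).1 ∧ (w i).1 ≤ (w i).2 ∧ (w i).2 ≤ hi) ∧
        (∀ i j : Fin l, i ≠ j → (w i).2 + 2 ≤ (w j).1 ∨ (w j).2 + 2 ≤ (w i).1) ∧
        (∀ x ∈ T, ∀ i : Fin l, ∃ p : Fin L.n,
          (w i).1 ≤ (p : ℕ) ∧ (p : ℕ) ≤ (w i).2 ∧ G.Adj x (L.f p))) := by
  intro l
  induction l with
  | zero => omega
  | succ l ih =>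
    intro _ S' hS'sub lo hi hlohi hhi hnbr hcard
    classical
    rcases Nat.eq_zero_or_pos l with rfl | hl
    · -- base case l + 1 = 1
      simp only [Nat.add_sub_cancel, pow_zero, Nat.mul_zero, Nat.add_zero, one_mul] at hcard
      obtain ⟨T, hTsub, hTcard⟩ := Finset.exists_subset_card_eq hcard
      refine Or.inr ⟨T, fun _ => (lo, hi), hTsub, hTcard, fun _ => ⟨le_refl _, hlohi, le_refl _⟩,
        ?_, ?_⟩
      · intro i j hij
        exact absurd (Fin.ext (by omega) : i = j) hij
      · intro x hx _
        exact hnbr x (hTsub hx)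
    · -- inductive step, l ≥ 1
      simp only [Nat.add_sub_cancel] at hcard
      have hA : 0 < a ^ (l - 1) := Nat.pow_pos ha
      have hm0 : 0 < s + d * (l - 1) := by omega
      have h1 : a ^ (l - 1) * a * (s + d * (l - 1) + d) ≤ S'.card := by
        have hpow : a ^ l = a ^ (l - 1) * a := by
          conv_lhs => rw [show l = (l - 1) + 1 by omega]
          rw [pow_succ]
        have hdl : d * l = d * (l - 1) + d := by
          conv_lhs => rw [show l = (l - 1) + 1 by omega]
          rw [Nat.mul_succ]
        calc a ^ (l - 1) * a * (s + d * (l - 1) + d)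
            = a ^ l * (s + d * l) := by rw [hpow, hdl]; ring
          _ ≤ S'.card := hcard
      have harith : a * (a ^ (l - 1) * (s + d * (l - 1)) + d - 1) <
          S'.card + (a ^ (l - 1) * (s + d * (l - 1)) + d - 1) :=
        arith a (a ^ (l - 1)) (s + d * (l - 1)) d S'.card ha hA hd h1
      rcases inner_lemma L (a ^ (l - 1) * (s + d * (l - 1)) + d) lo hi a S' hnbr harith with
        ⟨x, hmem, hnbrx, hord⟩ | ⟨pp, C, hppl, hpph, hCsub, hCcard, hCprop⟩
      · exact Or.inl ⟨lo, hi, x, le_refl _, hlohi, le_refl _, hmem, hnbrx, hord⟩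
      · -- clique point case
        set D : Finset V := C.filter (fun x => G.Adj x (L.f pp)) with hD
        have hDcard : D.card ≤ d := by
          have hsub : (↑D : Set V) ⊆ (↑S₀ : Set V) ∩ {x | G.Adj x (L.f pp)} := by
            intro y hy
            rw [Finset.mem_coe, hD, Finset.mem_filter] at hy
            exact ⟨hS'sub (hCsub hy.1), hy.2⟩
          calc D.card = (↑D : Set V).ncard := (Set.ncard_coe_finset _).symm
            _ ≤ ((↑S₀ : Set V) ∩ {x | G.Adj x (L.f pp)}).ncard :=
                Set.ncard_le_ncard hsub (S₀.finite_toSet.inter_of_left _)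
            _ ≤ d := hmeag pp
        have hDC : D ⊆ C := by rw [hD]; exact Finset.filter_subset _ _
        have hC'card : a ^ (l - 1) * (s + d * (l - 1)) ≤ (C \ D).card := by
          have h2 := Finset.card_sdiff_add_card_eq_card hDC
          omega
        have hC'prop : ∀ x ∈ C \ D,
            (∃ q : Fin L.n, lo ≤ (q : ℕ) ∧ (q : ℕ) < (pp : ℕ) ∧ G.Adj x (L.f q)) ∧
            (∃ q : Fin L.n, (pp : ℕ) < (q : ℕ) ∧ (q : ℕ) ≤ hi ∧ G.Adj x (L.f q)) := by
          intro x hx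
          obtain ⟨hxC, hxD⟩ := Finset.mem_sdiff.mp hx
          have hnadj : ¬ G.Adj x (L.f pp) := fun hadj =>
            hxD (Finset.mem_filter.mpr ⟨hxC, hadj⟩)
          obtain ⟨⟨q1, hq1a, hq1b, hq1c⟩, ⟨q2, hq2a, hq2b, hq2c⟩⟩ := hCprop x hxC
          have hq1ne : (q1 : ℕ) ≠ (pp : ℕ) := by
            intro heq
            exact hnadj (Fin.ext heq ▸ hq1c)
          have hq2ne : (q2 : ℕ) ≠ (pp : ℕ) := by
            intro heq
            exact hnadj (Fin.ext heq ▸ hq2c)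
          exact ⟨⟨q1, hq1a, by omega, hq1c⟩, ⟨q2, by omega, hq2b, hq2c⟩⟩
        have hC'ne : (C \ D).Nonempty := by
          rw [← Finset.card_pos]
          have : 0 < a ^ (l - 1) * (s + d * (l - 1)) := Nat.mul_pos hA hm0
          omega
        obtain ⟨xb, hxb⟩ := hC'ne
        have hloppb : lo < (pp : ℕ) ∧ (pp : ℕ) < hi := by
          obtain ⟨⟨q1, hq1a, hq1b, _⟩, ⟨q2, hq2a, hq2b, _⟩⟩ := hC'prop xb hxb
          omega
        have hppn : (pp : ℕ) < L.n := pp.2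
        have hC'sub : C \ D ⊆ S' := fun x hx => hCsub (Finset.sdiff_subset hx)
        rcases ih hl (C \ D) (hC'sub.trans hS'sub) lo ((pp : ℕ) - 1) (by omega) (by omega)
          (fun x hx => by
            obtain ⟨q, hq1, hq2, hq3⟩ := (hC'prop x hx).1
            exact ⟨q, hq1, by omega, hq3⟩) hC'card with
          ⟨lo', hi', x, ha1, ha2, ha3, ha4, ha5, ha6⟩ | ⟨T, w, hT, hTc, hbounds, hgaps, hTnbr⟩
        · exact Or.inl ⟨lo', hi', x, ha1, ha2, by omega, fun i => hC'sub (ha4 i), ha5, ha6⟩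
        · refine Or.inr ⟨T, fun i => if h : (i : ℕ) < l then w ⟨i, h⟩ else ((pp : ℕ) + 1, hi),
            hT.trans hC'sub, hTc, ?_, ?_, ?_⟩
          · intro i
            by_cases h : (i : ℕ) < l
            · simp only [dif_pos h]
              have := hbounds ⟨i, h⟩
              exact ⟨this.1, this.2.1, by omega⟩
            · simp only [dif_neg h]
              exact ⟨by omega, by omega, le_refl _⟩
          · intro i j hij
            by_cases hi' : (i : ℕ) < l <;> by_cases hj' : (j : ℕ) < l
            · simp only [dif_pos hi', dif_pos hj']
              refine hgaps ⟨i, hi'⟩ ⟨j, hj'⟩ ?_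
              intro heq
              have hv : (i : ℕ) = (j : ℕ) := by injection heq
              exact hij (Fin.ext hv)
            · simp only [dif_pos hi', dif_neg hj']
              have := hbounds ⟨i, hi'⟩
              left; omega
            · simp only [dif_neg hi', dif_pos hj']
              have := hbounds ⟨j, hj'⟩
              right; omega
            · exfalso
              have hiv := i.2
              have hjv := j.2
              exact hij (Fin.ext (by omega))
          · intro x hx i
            by_cases h : (i : ℕ) < l
            · simp only [dif_pos h]
              exact hTnbr x hx ⟨i, h⟩
            · simp only [dif_neg h]
              obtain ⟨q, hq1, hq2, hq3⟩ := (hC'prop x (hT hx)).2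
              exact ⟨q, by omega, hq2, hq3⟩

/-- Lemma 4.2: from a `d`-meager `(a^(l-1)·(s + d(l-1)), 1)`-constellation
`(S₀, L₀)` one obtains either an `a`-alignment `(S, L, π)` with `S ⊆ S₀` and
`L` a subpath of `L₀`, or a plain `(s, l)`-constellation with stable side
inside `S₀` and every path a subpath of `L₀`. -/
theorem stmt7 (a d s l : ℕ) (ha : 0 < a) (hd : 0 < d) (hs : 0 < s) (hl : 0 < l)
    (V : Type u) (G : SimpleGraph V)
    (c₀ : Constellation G (a ^ (l - 1) * (s + d * (l - 1))) 1)
    (hm : c₀.Meager d) :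
    (∃ A : PathAlignment G a, A.S ⊆ c₀.S ∧ (A.P 0).verts ⊆ (c₀.P 0).verts) ∨
    (∃ c : Constellation G s l, c.Plain ∧ c.S ⊆ c₀.S ∧
      ∀ i : Fin l, (c.P i).verts ⊆ (c₀.P 0).verts) := by
  classical
  have hn : 0 < (c₀.P 0).n := (c₀.P 0).npos
  have hmeag : ∀ p : Fin (c₀.P 0).n,
      ((↑c₀.S : Set V) ∩ {x | G.Adj x ((c₀.P 0).f p)}).ncard ≤ d := hm 0
  have hnbr0 : ∀ x ∈ c₀.S, ∃ p : Fin (c₀.P 0).n,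
      0 ≤ (p : ℕ) ∧ (p : ℕ) ≤ (c₀.P 0).n - 1 ∧ G.Adj x ((c₀.P 0).f p) := by
    intro x hx
    obtain ⟨v, hv, hadj⟩ := c₀.nbr x hx 0
    obtain ⟨p, rfl⟩ := hv
    exact ⟨p, Nat.zero_le _, by have := p.2; omega, hadj⟩
  have hcard : a ^ (l - 1) * (s + d * (l - 1)) ≤ c₀.S.card := le_of_eq c₀.card_S.symm
  rcases key_lemma a d s ha hd hs c₀.S (c₀.P 0) hmeag l hl c₀.S (subset_refl _)
      0 ((c₀.P 0).n - 1) (by omega) (by omega) hnbr0 hcard with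
    ⟨lo', hi', x, _, hlh, hhi', hmemA, hnbrA, hordA⟩ | ⟨T, w, hT, hTc, hbounds, hgaps, hTnbr⟩
  · left
    have hhi'n : hi' < (c₀.P 0).n := by omega
    have hxinj : Function.Injective x := by
      intro i j hij
      by_contra hne
      rcases lt_trichotomy i j with h | h | h
      · obtain ⟨p, h1, h2, h3⟩ := hnbrA j
        have h3' : G.Adj (x i) ((c₀.P 0).f p) := by rw [hij]; exact h3
        exact absurd (hordA i j h p p h1 h2 h1 h2 h3' h3) (lt_irrefl _)
      · exact hne h
      · obtain ⟨p, h1, h2, h3⟩ := hnbrA i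
        have h3' : G.Adj (x j) ((c₀.P 0).f p) := by rw [← hij]; exact h3
        exact absurd (hordA j i h p p h1 h2 h1 h2 h3' h3) (lt_irrefl _)
    refine ⟨{ S := Finset.image x Finset.univ,
              card_S := by
                rw [Finset.card_image_of_injective _ hxinj, Finset.card_univ, Fintype.card_fin],
              stable := ?_,
              P := fun _ => psub (c₀.P 0) lo' hi' hlh hhi'n,
              disj := fun i j hij => absurd (Subsingleton.elim i j) hij,
              sep := ?_, nbr := ?_,
              π := x, π_inj := hxinj,
              π_mem := fun i => Finset.mem_image_of_mem x (Finset.mem_univ i),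
              order := ?_ }, ?_, ?_⟩
    · intro u hu v hv
      obtain ⟨i0, -, rfl⟩ := Finset.mem_image.mp hu
      obtain ⟨j0, -, rfl⟩ := Finset.mem_image.mp hv
      exact c₀.stable _ (hmemA i0) _ (hmemA j0)
    · intro u hu i hv
      obtain ⟨i0, -, rfl⟩ := Finset.mem_image.mp hu
      exact c₀.sep _ (hmemA i0) 0 (psub_verts_subset (c₀.P 0) lo' hi' hlh hhi'n hv)
    · intro u hu i
      obtain ⟨i0, -, rfl⟩ := Finset.mem_image.mp hu
      obtain ⟨p, h1, h2, h3⟩ := hnbrA i0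
      exact ⟨(c₀.P 0).f p, mem_psub_verts (c₀.P 0) lo' hi' hlh hhi'n p h1 h2, h3⟩
    · refine ⟨false, ?_⟩
      intro i j hij p q hadjp hadjq
      rw [if_neg (by decide : ¬ (false = true))]
      have hp2 : (p : ℕ) < hi' + 1 - lo' := p.2
      have hq2 : (q : ℕ) < hi' + 1 - lo' := q.2
      have hadjp' : G.Adj (x i) ((c₀.P 0).f ⟨lo' + (p : ℕ), by omega⟩) := hadjp
      have hadjq' : G.Adj (x j) ((c₀.P 0).f ⟨lo' + (q : ℕ), by omega⟩) := hadjq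
      have key := hordA i j hij ⟨lo' + (p : ℕ), by omega⟩ ⟨lo' + (q : ℕ), by omega⟩
        (Nat.le_add_right _ _) (show lo' + (p : ℕ) ≤ hi' by omega)
        (Nat.le_add_right _ _) (show lo' + (q : ℕ) ≤ hi' by omega) hadjp' hadjq'
      have key2 : lo' + (p : ℕ) < lo' + (q : ℕ) := key
      omega
    · intro u hu
      obtain ⟨i0, -, rfl⟩ := Finset.mem_image.mp hu
      exact hmemA i0
    · exact psub_verts_subset (c₀.P 0) lo' hi' hlh hhi'n
  · right
    have hwn : ∀ i : Fin l, (w i).2 < (c₀.P 0).n := fun i => by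
      have := (hbounds i).2.2; omega
    refine ⟨{ S := T, card_S := hTc,
              stable := fun u hu v hv => c₀.stable u (hT hu) v (hT hv),
              P := fun i => psub (c₀.P 0) (w i).1 (w i).2 (hbounds i).2.1 (hwn i),
              disj := ?_, sep := ?_, nbr := ?_ }, ?_, ?_, ?_⟩
    · intro i j hij
      rw [Set.disjoint_left]
      intro v hvi hvj
      rw [psub_verts] at hvi hvj
      obtain ⟨p, hp1, hp2, rfl⟩ := hvi
      obtain ⟨q, hq1, hq2, hvq⟩ := hvj
      have hpq : p = q := (c₀.P 0).inj hvq
      have hpq' : (p : ℕ) = (q : ℕ) := by rw [hpq]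
      have hg := hgaps i j hij
      omega
    · intro u hu i hv
      exact c₀.sep u (hT hu) 0 (psub_verts_subset (c₀.P 0) _ _ _ _ hv)
    · intro u hu i
      obtain ⟨p, h1, h2, h3⟩ := hTnbr u hu i
      exact ⟨(c₀.P 0).f p, mem_psub_verts (c₀.P 0) _ _ _ _ p h1 h2, h3⟩
    · intro i j hij u hu v hv hadj
      rw [show (Constellation.P _ i) = psub (c₀.P 0) (w i).1 (w i).2 (hbounds i).2.1 (hwn i)
        from rfl, psub_verts] at hu
      rw [show (Constellation.P _ j) = psub (c₀.P 0) (w j).1 (w j).2 (hbounds j).2.1 (hwn j)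
        from rfl, psub_verts] at hv
      obtain ⟨p, hp1, hp2, rfl⟩ := hu
      obtain ⟨q, hq1, hq2, rfl⟩ := hv
      rw [(c₀.P 0).adj] at hadj
      have hg := hgaps i j hij
      omega
    · exact hT
    · intro i
      exact psub_verts_subset (c₀.P 0) (w i).1 (w i).2 (hbounds i).2.1 (hwn i)
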